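/- arXiv:1009.4081 — 5 statements merged into one kernel-verified Lean document; each statement's English description precedes it below -/
import Mathlib

section
/- If f : [a,b] → (0,∞) is r-convex and g : [a,b] → (0,∞) is s-convex on [a,b] with a < b, r > 1, and 1/r + 1/s = 1, then (1/(b-a)) ∫_a^b f(x)g(x) dx ≤ ((f(a)^r + f(b)^r)/2)^(1/r) · ((g(a)^s + g(b)^s)/2)^(1/s). -/
open MeasureTheory

/-- Integral of an affine combination written with weights `(b-x)` and `(x-a)`. -/
lemma lin_weight_integral (a b α β : ℝ) :
    ∫ x in a..b, (α * (b - x) + β * (x - a)) = (α + β) * (b - a) ^ 2 / 2 := by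
  have h : (fun x : ℝ => α * (b - x) + β * (x - a))
      = fun x : ℝ => (α * b - β * a) + (β - α) * x := by
    funext x; ring
  have h2 : IntervalIntegrable (fun x : ℝ => (β - α) * x) volume a b := by
    apply Continuous.intervalIntegrable; fun_prop
  rw [h, intervalIntegral.integral_add (intervalIntegrable_const) h2,
      intervalIntegral.integral_const, intervalIntegral.integral_const_mul,
      integral_id]
  simp only [smul_eq_mul]
  ring

theorem rconvex_product_holder_hadamard
    (a b r s : ℝ) (f g : ℝ → ℝ) (hab : a < b)
    (hr : 1 < r) (hrs : 1 / r + 1 / s = 1)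
    (hfpos : ∀ x ∈ Set.Icc a b, 0 < f x)
    (hgpos : ∀ x ∈ Set.Icc a b, 0 < g x)
    (hfconv : ∀ x ∈ Set.Icc a b, ∀ y ∈ Set.Icc a b, ∀ t ∈ Set.Icc (0:ℝ) 1,
      f (t * x + (1 - t) * y) ≤ (t * f x ^ r + (1 - t) * f y ^ r) ^ (1 / r))
    (hgconv : ∀ x ∈ Set.Icc a b, ∀ y ∈ Set.Icc a b, ∀ t ∈ Set.Icc (0:ℝ) 1,
      g (t * x + (1 - t) * y) ≤ (t * g x ^ s + (1 - t) * g y ^ s) ^ (1 / s))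
    (hintf : IntervalIntegrable f volume a b)
    (hintg : IntervalIntegrable g volume a b)
    (hintfg : IntervalIntegrable (fun x => f x * g x) volume a b) :
    (1 / (b - a)) * ∫ x in a..b, f x * g x ≤
      ((f a ^ r + f b ^ r) / 2) ^ (1 / r) * ((g a ^ s + g b ^ s) / 2) ^ (1 / s) := by
  have hba : (0:ℝ) < b - a := sub_pos.mpr hab
  have hconj : r.HolderConjugate s := by
    rw [Real.holderConjugate_iff]
    constructor
    · exact hr
    · rw [inv_eq_one_div, inv_eq_one_div]; exact hrs
  have hr0 : (0:ℝ) < r := hconj.pos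
  have hs0 : (0:ℝ) < s := hconj.symm.pos
  have ha_mem : a ∈ Set.Icc a b := ⟨le_refl a, hab.le⟩
  have hb_mem : b ∈ Set.Icc a b := ⟨hab.le, le_refl b⟩
  set A := f a ^ r with hA
  set B := f b ^ r with hB
  set C := g a ^ s with hC
  set D := g b ^ s with hD
  have hApos : 0 < A := Real.rpow_pos_of_pos (hfpos a ha_mem) r
  have hBpos : 0 < B := Real.rpow_pos_of_pos (hfpos b hb_mem) r
  have hCpos : 0 < C := Real.rpow_pos_of_pos (hgpos a ha_mem) s
  have hDpos : 0 < D := Real.rpow_pos_of_pos (hgpos b hb_mem) s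
  set M := (A + B) / 2 with hM
  set N := (C + D) / 2 with hN
  have hMpos : 0 < M := by positivity
  have hNpos : 0 < N := by positivity
  set K := M ^ (1 / r) * N ^ (1 / s) with hK
  have hKpos : 0 < K := by positivity
  -- the affine upper bound
  set h : ℝ → ℝ := fun x =>
    K * ((A * (b - x) + B * (x - a)) / (b - a) / (M * r)
       + (C * (b - x) + D * (x - a)) / (b - a) / (N * s)) with hh
  clear_value A B C D M N K h
  have hle : ∀ x ∈ Set.Icc a b, f x * g x ≤ h x := by
    intro x hx
    set t := (b - x) / (b - a) with ht
    have ht0 : 0 ≤ t := by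
      apply div_nonneg _ hba.le; linarith [hx.2]
    have ht1 : t ≤ 1 := by
      rw [div_le_one hba]; linarith [hx.1]
    have htmem : t ∈ Set.Icc (0:ℝ) 1 := ⟨ht0, ht1⟩
    have hxeq : t * a + (1 - t) * b = x := by
      field_simp [ht]; rw [ht]; field_simp; ring
    set φ := t * A + (1 - t) * B with hφ
    set ψ := t * C + (1 - t) * D with hψ
    have h1t : 0 ≤ 1 - t := by linarith
    have hφpos : 0 < φ := by
      have hmin : min A B ≤ t * A + (1 - t) * B := by
        nlinarith [mul_nonneg ht0 (sub_nonneg.mpr (min_le_left A B)),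
          mul_nonneg h1t (sub_nonneg.mpr (min_le_right A B))]
      rw [hφ]; exact lt_of_lt_of_le (lt_min hApos hBpos) hmin
    have hψpos : 0 < ψ := by
      have hmin : min C D ≤ t * C + (1 - t) * D := by
        nlinarith [mul_nonneg ht0 (sub_nonneg.mpr (min_le_left C D)),
          mul_nonneg h1t (sub_nonneg.mpr (min_le_right C D))]
      rw [hψ]; exact lt_of_lt_of_le (lt_min hCpos hDpos) hmin
    have hf : f x ≤ φ ^ (1 / r) := by
      have hcv := hfconv a ha_mem b hb_mem t htmem
      rw [hxeq] at hcv
      rw [hφ, hA, hB]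
      exact hcv
    have hg : g x ≤ ψ ^ (1 / s) := by
      have hcv := hgconv a ha_mem b hb_mem t htmem
      rw [hxeq] at hcv
      rw [hψ, hC, hD]
      exact hcv
    have h1 : f x * g x ≤ φ ^ (1 / r) * ψ ^ (1 / s) :=
      mul_le_mul hf hg (hgpos x hx).le (Real.rpow_nonneg hφpos.le _)
    -- Young step
    have hu : (0:ℝ) < φ / M := div_pos hφpos hMpos
    have hv : (0:ℝ) < ψ / N := div_pos hψpos hNpos
    have hyoung := Real.young_inequality_of_nonneg
      (Real.rpow_nonneg hu.le (1 / r)) (Real.rpow_nonneg hv.le (1 / s)) hconj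
    have hur : ((φ / M) ^ (1 / r)) ^ r = φ / M := by
      rw [← Real.rpow_mul hu.le, one_div, inv_mul_cancel₀ hr0.ne', Real.rpow_one]
    have hvs : ((ψ / N) ^ (1 / s)) ^ s = ψ / N := by
      rw [← Real.rpow_mul hv.le, one_div, inv_mul_cancel₀ hs0.ne', Real.rpow_one]
    rw [hur, hvs] at hyoung
    have hsplit : φ ^ (1 / r) * ψ ^ (1 / s)
        = K * ((φ / M) ^ (1 / r) * (ψ / N) ^ (1 / s)) := by
      rw [hK, Real.div_rpow hφpos.le hMpos.le, Real.div_rpow hψpos.le hNpos.le]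
      field_simp
    have h2 : φ ^ (1 / r) * ψ ^ (1 / s) ≤ K * (φ / M / r + ψ / N / s) := by
      rw [hsplit]
      exact mul_le_mul_of_nonneg_left hyoung hKpos.le
    have hheq : h x = K * (φ / M / r + ψ / N / s) := by
      rw [hh, hφ, hψ, ht]
      have h1t' : 1 - (b - x) / (b - a) = (x - a) / (b - a) := by
        field_simp
        ring
      rw [h1t']
      field_simp
    rw [hheq]
    exact le_trans h1 h2
  -- integrability of h
  have hcont : Continuous h := by
    rw [hh]; fun_prop
  have hinth : IntervalIntegrable h volume a b := hcont.intervalIntegrable a b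
  have hmono := intervalIntegral.integral_mono_on hab.le hintfg hinth hle
  -- compute the integral of h
  have hinteg : ∫ x in a..b, h x = K * (b - a) := by
    have e1 : ∀ x : ℝ, h x
        = (K / ((b - a) * (M * r))) * (A * (b - x) + B * (x - a))
        + (K / ((b - a) * (N * s))) * (C * (b - x) + D * (x - a)) := by
      intro x
      rw [hh]
      field_simp
    simp_rw [e1]
    rw [intervalIntegral.integral_add, intervalIntegral.integral_const_mul,
        intervalIntegral.integral_const_mul, lin_weight_integral, lin_weight_integral]
    · have hMe : A + B = 2 * M := by rw [hM]; ring
      have hNe : C + D = 2 * N := by rw [hN]; ring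
      rw [hMe, hNe]
      have e2 : K / ((b - a) * (M * r)) * (2 * M * (b - a) ^ 2 / 2)
          = K * (b - a) * (1 / r) := by
        field_simp
      have e3 : K / ((b - a) * (N * s)) * (2 * N * (b - a) ^ 2 / 2)
          = K * (b - a) * (1 / s) := by
        field_simp
      rw [e2, e3, ← mul_add, hrs, mul_one]
    · exact ((continuous_const.mul (by fun_prop)).intervalIntegrable a b)
    · exact ((continuous_const.mul (by fun_prop)).intervalIntegrable a b)
  rw [hinteg] at hmono
  have : (1 / (b - a)) * ∫ x in a..b, f x * g x ≤ (1 / (b - a)) * (K * (b - a)) := by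
    apply mul_le_mul_of_nonneg_left hmono
    positivity
  refine le_trans this (le_of_eq ?_)
  field_simp
end

section
/- Let f, g : Δ = [a,b]×[c,d] → (0,∞) be coordinated 2-convex functions with a < b, c < d. Then (1/((b-a)(d-c))) ∫_a^b ∫_c^d f(x,y) g(x,y) dy dx ≤ (1/(8(b-a))) [∫_a^b f(x,c)² dx + ∫_a^b f(x,d)² dx + ∫_a^b g(x,c)² dx + ∫_a^b g(x,d)² dx] + (1/(8(d-c))) [∫_c^d f(a,y)² dy + ∫_c^d f(b,y)² dy + ∫_c^d g(a,y)² dy + ∫_c^d g(b,y)² dy]. -/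
open MeasureTheory
open Set

lemma chord_bound (c d : ℝ) (hcd : c < d) (h : ℝ → ℝ)
    (hconv : ∀ v₁ ∈ Icc c d, ∀ v₂ ∈ Icc c d, ∀ t ∈ Icc (0:ℝ) 1,
      h (t * v₁ + (1 - t) * v₂) ≤ t * h v₁ + (1 - t) * h v₂) :
    ∀ y ∈ Icc c d, h y ≤ ((d - y) * h c + (y - c) * h d) / (d - c) := by
  intro y hy
  have hdc : (0:ℝ) < d - c := sub_pos.2 hcd
  have ht : (y - c) / (d - c) ∈ Icc (0:ℝ) 1 := by
    constructor
    · exact div_nonneg (sub_nonneg.2 hy.1) hdc.le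
    · rw [div_le_one hdc]; linarith [hy.2]
  have hyd : (y - c) / (d - c) * d + (1 - (y - c) / (d - c)) * c = y := by
    field_simp
    ring
  have := hconv d ⟨hcd.le, le_refl d⟩ c ⟨le_refl c, hcd.le⟩ _ ht
  rw [hyd] at this
  calc h y ≤ (y - c) / (d - c) * h d + (1 - (y - c) / (d - c)) * h c := this
    _ = ((d - y) * h c + (y - c) * h d) / (d - c) := by field_simp; ring

lemma hadamard_right (c d : ℝ) (hcd : c < d) (h : ℝ → ℝ)
    (hnn : ∀ y ∈ Icc c d, 0 ≤ h y)
    (hconv : ∀ v₁ ∈ Icc c d, ∀ v₂ ∈ Icc c d, ∀ t ∈ Icc (0:ℝ) 1,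
      h (t * v₁ + (1 - t) * v₂) ≤ t * h v₁ + (1 - t) * h v₂) :
    IntegrableOn h (Icc c d) volume ∧
      ∫ y in Icc c d, h y ≤ (d - c) / 2 * (h c + h d) := by
  have hdc : (0:ℝ) < d - c := sub_pos.2 hcd
  have hchord := chord_bound c d hcd h hconv
  have hcv : ConvexOn ℝ (Icc c d) h := by
    refine ⟨convex_Icc c d, fun x hx y hy p q hp hq hpq => ?_⟩
    have := hconv x hx y hy p ⟨hp, by linarith⟩
    simpa [smul_eq_mul, show 1 - p = q by linarith] using this
  have hcont : ContinuousOn h (Ioo c d) := by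
    simpa [interior_Icc] using hcv.continuousOn_interior
  have hbd : ∀ y ∈ Icc c d, ‖h y‖ ≤ h c + h d := by
    intro y hy
    have h0 := hnn y hy
    rw [Real.norm_eq_abs, abs_of_nonneg h0]
    have := hchord y hy
    rw [le_div_iff₀ hdc] at this
    nlinarith [hnn c ⟨le_refl c, hcd.le⟩, hnn d ⟨hcd.le, le_refl d⟩, hy.1, hy.2]
  have hintIoo : IntegrableOn h (Ioo c d) volume := by
    refine Integrable.mono' (g := fun _ => h c + h d)
      (integrableOn_const measure_Ioo_lt_top.ne)
      (hcont.aestronglyMeasurable measurableSet_Ioo) ?_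
    exact (ae_restrict_iff' measurableSet_Ioo).2 (ae_of_all _
      (fun y hy => hbd y ⟨hy.1.le, hy.2.le⟩))
  have hint : IntegrableOn h (Icc c d) volume :=
    hintIoo.congr_set_ae Ioo_ae_eq_Icc.symm
  refine ⟨hint, ?_⟩
  have hlin : IntegrableOn (fun y => ((d - y) * h c + (y - c) * h d) / (d - c)) (Icc c d) volume :=
    Continuous.integrableOn_Icc (by fun_prop)
  have hmono : ∫ y in Icc c d, h y ≤ ∫ y in Icc c d, ((d - y) * h c + (y - c) * h d) / (d - c) :=
    setIntegral_mono_on hint hlin measurableSet_Icc hchord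
  have hcalc : ∫ y in Icc c d, ((d - y) * h c + (y - c) * h d) / (d - c)
      = (d - c) / 2 * (h c + h d) := by
    rw [MeasureTheory.integral_Icc_eq_integral_Ioc,
      ← intervalIntegral.integral_of_le hcd.le]
    have heq : (fun y => ((d - y) * h c + (y - c) * h d) / (d - c))
        = fun y => ((h d - h c) / (d - c)) * y + ((d * h c - c * h d) / (d - c)) := by
      funext y; field_simp; ring
    rw [heq, intervalIntegral.integral_add (f := fun y => ((h d - h c) / (d - c)) * y)
      (((continuous_const.mul continuous_id').intervalIntegrable c d))
      (intervalIntegrable_const),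
      intervalIntegral.integral_const_mul, integral_id,
      intervalIntegral.integral_const]
    simp only [smul_eq_mul]
    field_simp
    ring
  linarith

lemma final_algebra (ba dc P Q J : ℝ) (h1 : 0 < ba) (h2 : 0 < dc)
    (hkey : J ≤ dc / 8 * P + ba / 8 * Q) :
    (1 / (ba * dc)) * J ≤ (1 / (8 * ba)) * P + (1 / (8 * dc)) * Q := by
  rw [div_mul_eq_mul_div, one_mul, div_le_iff₀ (by positivity)]
  calc J ≤ dc / 8 * P + ba / 8 * Q := hkey
    _ = ((1 / (8 * ba)) * P + (1 / (8 * dc)) * Q) * (ba * dc) := by field_simp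

theorem coordinated_two_convex_product_hadamard
    (a b c d : ℝ) (f g : ℝ → ℝ → ℝ) (hab : a < b) (hcd : c < d)
    (hfpos : ∀ x ∈ Set.Icc a b, ∀ y ∈ Set.Icc c d, 0 < f x y)
    (hgpos : ∀ x ∈ Set.Icc a b, ∀ y ∈ Set.Icc c d, 0 < g x y)
    (hfconv₁ : ∀ y ∈ Set.Icc c d, ∀ u₁ ∈ Set.Icc a b, ∀ u₂ ∈ Set.Icc a b, ∀ t ∈ Set.Icc (0:ℝ) 1,
      f (t * u₁ + (1 - t) * u₂) y ^ 2 ≤ t * f u₁ y ^ 2 + (1 - t) * f u₂ y ^ 2)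
    (hfconv₂ : ∀ x ∈ Set.Icc a b, ∀ v₁ ∈ Set.Icc c d, ∀ v₂ ∈ Set.Icc c d, ∀ t ∈ Set.Icc (0:ℝ) 1,
      f x (t * v₁ + (1 - t) * v₂) ^ 2 ≤ t * f x v₁ ^ 2 + (1 - t) * f x v₂ ^ 2)
    (hgconv₁ : ∀ y ∈ Set.Icc c d, ∀ u₁ ∈ Set.Icc a b, ∀ u₂ ∈ Set.Icc a b, ∀ t ∈ Set.Icc (0:ℝ) 1,
      g (t * u₁ + (1 - t) * u₂) y ^ 2 ≤ t * g u₁ y ^ 2 + (1 - t) * g u₂ y ^ 2)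
    (hgconv₂ : ∀ x ∈ Set.Icc a b, ∀ v₁ ∈ Set.Icc c d, ∀ v₂ ∈ Set.Icc c d, ∀ t ∈ Set.Icc (0:ℝ) 1,
      g x (t * v₁ + (1 - t) * v₂) ^ 2 ≤ t * g x v₁ ^ 2 + (1 - t) * g x v₂ ^ 2)
    (hintf : IntegrableOn (fun p : ℝ × ℝ => f p.1 p.2) (Set.Icc a b ×ˢ Set.Icc c d) volume)
    (hintg : IntegrableOn (fun p : ℝ × ℝ => g p.1 p.2) (Set.Icc a b ×ˢ Set.Icc c d) volume)
    (hintfg : IntegrableOn (fun p : ℝ × ℝ => f p.1 p.2 * g p.1 p.2)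
      (Set.Icc a b ×ˢ Set.Icc c d) volume) :
    (1 / ((b - a) * (d - c))) * ∫ x in a..b, ∫ y in c..d, f x y * g x y ≤
      (1 / (8 * (b - a))) *
        ((∫ x in a..b, f x c ^ 2) + (∫ x in a..b, f x d ^ 2) +
          (∫ x in a..b, g x c ^ 2) + (∫ x in a..b, g x d ^ 2)) +
      (1 / (8 * (d - c))) *
        ((∫ y in c..d, f a y ^ 2) + (∫ y in c..d, f b y ^ 2) +
          (∫ y in c..d, g a y ^ 2) + (∫ y in c..d, g b y ^ 2)) := by
  have hba : (0:ℝ) < b - a := sub_pos.2 hab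
  have hdc : (0:ℝ) < d - c := sub_pos.2 hcd
  have hcm : c ∈ Icc c d := ⟨le_refl c, hcd.le⟩
  have hdm : d ∈ Icc c d := ⟨hcd.le, le_refl d⟩
  have ham : a ∈ Icc a b := ⟨le_refl a, hab.le⟩
  have hbm : b ∈ Icc a b := ⟨hab.le, le_refl b⟩
  -- slice bounds in y-direction for f and g
  have hslicef : ∀ x ∈ Icc a b, IntegrableOn (fun y => f x y ^ 2) (Icc c d) volume ∧
      ∫ y in Icc c d, f x y ^ 2 ≤ (d - c) / 2 * (f x c ^ 2 + f x d ^ 2) :=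
    fun x hx => hadamard_right c d hcd _ (fun y _ => sq_nonneg _) (hfconv₂ x hx)
  have hsliceg : ∀ x ∈ Icc a b, IntegrableOn (fun y => g x y ^ 2) (Icc c d) volume ∧
      ∫ y in Icc c d, g x y ^ 2 ≤ (d - c) / 2 * (g x c ^ 2 + g x d ^ 2) :=
    fun x hx => hadamard_right c d hcd _ (fun y _ => sq_nonneg _) (hgconv₂ x hx)
  -- slice bounds in x-direction
  have hslicef' : ∀ y ∈ Icc c d, IntegrableOn (fun x => f x y ^ 2) (Icc a b) volume ∧
      ∫ x in Icc a b, f x y ^ 2 ≤ (b - a) / 2 * (f a y ^ 2 + f b y ^ 2) :=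
    fun y hy => hadamard_right a b hab _ (fun x _ => sq_nonneg _) (hfconv₁ y hy)
  have hsliceg' : ∀ y ∈ Icc c d, IntegrableOn (fun x => g x y ^ 2) (Icc a b) volume ∧
      ∫ x in Icc a b, g x y ^ 2 ≤ (b - a) / 2 * (g a y ^ 2 + g b y ^ 2) :=
    fun y hy => hadamard_right a b hab _ (fun x _ => sq_nonneg _) (hgconv₁ y hy)
  -- pointwise corner bounds
  have hcbf : ∀ x ∈ Icc a b, ∀ y ∈ Icc c d,
      f x y ^ 2 ≤ f a c ^ 2 + f a d ^ 2 + f b c ^ 2 + f b d ^ 2 := by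
    intro x hx y hy
    have h1 := chord_bound c d hcd (fun y => f x y ^ 2) (hfconv₂ x hx) y hy
    have h2 := chord_bound a b hab (fun x => f x c ^ 2) (hfconv₁ c hcm) x hx
    have h3 := chord_bound a b hab (fun x => f x d ^ 2) (hfconv₁ d hdm) x hx
    rw [le_div_iff₀ hdc] at h1
    rw [le_div_iff₀ hba] at h2 h3
    have hxc : f x c ^ 2 ≤ f a c ^ 2 + f b c ^ 2 := by
      nlinarith [mul_nonneg (sub_nonneg.2 hx.1) (sq_nonneg (f a c)),
        mul_nonneg (sub_nonneg.2 hx.2) (sq_nonneg (f b c))]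
    have hxd : f x d ^ 2 ≤ f a d ^ 2 + f b d ^ 2 := by
      nlinarith [mul_nonneg (sub_nonneg.2 hx.1) (sq_nonneg (f a d)),
        mul_nonneg (sub_nonneg.2 hx.2) (sq_nonneg (f b d))]
    have h4 : f x y ^ 2 ≤ f x c ^ 2 + f x d ^ 2 := by
      nlinarith [mul_nonneg (sub_nonneg.2 hy.1) (sq_nonneg (f x c)),
        mul_nonneg (sub_nonneg.2 hy.2) (sq_nonneg (f x d))]
    linarith
  have hcbg : ∀ x ∈ Icc a b, ∀ y ∈ Icc c d,
      g x y ^ 2 ≤ g a c ^ 2 + g a d ^ 2 + g b c ^ 2 + g b d ^ 2 := by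
    intro x hx y hy
    have h1 := chord_bound c d hcd (fun y => g x y ^ 2) (hgconv₂ x hx) y hy
    have h2 := chord_bound a b hab (fun x => g x c ^ 2) (hgconv₁ c hcm) x hx
    have h3 := chord_bound a b hab (fun x => g x d ^ 2) (hgconv₁ d hdm) x hx
    rw [le_div_iff₀ hdc] at h1
    rw [le_div_iff₀ hba] at h2 h3
    have hxc : g x c ^ 2 ≤ g a c ^ 2 + g b c ^ 2 := by
      nlinarith [mul_nonneg (sub_nonneg.2 hx.1) (sq_nonneg (g a c)),
        mul_nonneg (sub_nonneg.2 hx.2) (sq_nonneg (g b c))]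
    have hxd : g x d ^ 2 ≤ g a d ^ 2 + g b d ^ 2 := by
      nlinarith [mul_nonneg (sub_nonneg.2 hx.1) (sq_nonneg (g a d)),
        mul_nonneg (sub_nonneg.2 hx.2) (sq_nonneg (g b d))]
    have h4 : g x y ^ 2 ≤ g x c ^ 2 + g x d ^ 2 := by
      nlinarith [mul_nonneg (sub_nonneg.2 hy.1) (sq_nonneg (g x c)),
        mul_nonneg (sub_nonneg.2 hy.2) (sq_nonneg (g x d))]
    linarith
  -- integrability of squares on the rectangle
  have hmsprod : MeasurableSet (Icc a b ×ˢ Icc c d) := measurableSet_Icc.prod measurableSet_Icc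
  have hvol : volume (Icc a b ×ˢ Icc c d) < ⊤ :=
    (isCompact_Icc.prod isCompact_Icc).measure_lt_top
  have hF2int : IntegrableOn (fun p : ℝ × ℝ => f p.1 p.2 ^ 2) (Icc a b ×ˢ Icc c d) volume := by
    have hm : AEStronglyMeasurable (fun p : ℝ × ℝ => f p.1 p.2 ^ 2)
        (volume.restrict (Icc a b ×ˢ Icc c d)) := by
      have := hintf.1
      have h2 : AEStronglyMeasurable (fun p : ℝ × ℝ => f p.1 p.2 * f p.1 p.2)
          (volume.restrict (Icc a b ×ˢ Icc c d)) := this.mul this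
      simpa [pow_two] using h2
    refine Integrable.mono' (g := fun _ => f a c ^ 2 + f a d ^ 2 + f b c ^ 2 + f b d ^ 2)
      (integrableOn_const hvol.ne) hm ?_
    refine (ae_restrict_iff' hmsprod).2 (ae_of_all _ fun p hp => ?_)
    rw [Real.norm_eq_abs, abs_of_nonneg (sq_nonneg _)]
    exact hcbf p.1 hp.1 p.2 hp.2
  have hG2int : IntegrableOn (fun p : ℝ × ℝ => g p.1 p.2 ^ 2) (Icc a b ×ˢ Icc c d) volume := by
    have hm : AEStronglyMeasurable (fun p : ℝ × ℝ => g p.1 p.2 ^ 2)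
        (volume.restrict (Icc a b ×ˢ Icc c d)) := by
      have := hintg.1
      have h2 : AEStronglyMeasurable (fun p : ℝ × ℝ => g p.1 p.2 * g p.1 p.2)
          (volume.restrict (Icc a b ×ˢ Icc c d)) := this.mul this
      simpa [pow_two] using h2
    refine Integrable.mono' (g := fun _ => g a c ^ 2 + g a d ^ 2 + g b c ^ 2 + g b d ^ 2)
      (integrableOn_const hvol.ne) hm ?_
    refine (ae_restrict_iff' hmsprod).2 (ae_of_all _ fun p hp => ?_)
    rw [Real.norm_eq_abs, abs_of_nonneg (sq_nonneg _)]
    exact hcbg p.1 hp.1 p.2 hp.2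
  -- product measure setup
  have hρ : (volume.restrict (Icc a b)).prod (volume.restrict (Icc c d))
      = volume.restrict (Icc a b ×ˢ Icc c d) := by
    rw [Measure.prod_restrict, ← Measure.volume_eq_prod]
  haveI : IsFiniteMeasure (volume.restrict (Icc a b)) :=
    ⟨by simpa using measure_Icc_lt_top⟩
  haveI : IsFiniteMeasure (volume.restrict (Icc c d)) :=
    ⟨by simpa using measure_Icc_lt_top⟩
  have hF2ρ : Integrable (fun p : ℝ × ℝ => f p.1 p.2 ^ 2)
      ((volume.restrict (Icc a b)).prod (volume.restrict (Icc c d))) := by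
    rw [hρ]; exact hF2int
  have hG2ρ : Integrable (fun p : ℝ × ℝ => g p.1 p.2 ^ 2)
      ((volume.restrict (Icc a b)).prod (volume.restrict (Icc c d))) := by
    rw [hρ]; exact hG2int
  have hFGρ : Integrable (fun p : ℝ × ℝ => f p.1 p.2 * g p.1 p.2)
      ((volume.restrict (Icc a b)).prod (volume.restrict (Icc c d))) := by
    rw [hρ]; exact hintfg
  -- fundamental quantities
  set Jfg := ∫ p, f p.1 p.2 * g p.1 p.2
      ∂((volume.restrict (Icc a b)).prod (volume.restrict (Icc c d))) with hJfg
  set Jf := ∫ p, f p.1 p.2 ^ 2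
      ∂((volume.restrict (Icc a b)).prod (volume.restrict (Icc c d))) with hJf
  set Jg := ∫ p, g p.1 p.2 ^ 2
      ∂((volume.restrict (Icc a b)).prod (volume.restrict (Icc c d))) with hJg
  -- AM-GM step
  have hAMGM : Jfg ≤ (1:ℝ)/2 * Jf + (1:ℝ)/2 * Jg := by
    have : Jfg ≤ ∫ p, (1:ℝ)/2 * (f p.1 p.2 ^ 2) + (1:ℝ)/2 * (g p.1 p.2 ^ 2)
        ∂((volume.restrict (Icc a b)).prod (volume.restrict (Icc c d))) := by
      refine integral_mono hFGρ ((hF2ρ.const_mul _).add (hG2ρ.const_mul _)) fun p => ?_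
      nlinarith [sq_nonneg (f p.1 p.2 - g p.1 p.2)]
    rwa [integral_add (hF2ρ.const_mul _) (hG2ρ.const_mul _),
      integral_const_mul, integral_const_mul] at this
  -- y-direction bound for Jf
  have hJfy : Jf ≤ (d - c) / 2 * ((∫ x in Icc a b, f x c ^ 2) + ∫ x in Icc a b, f x d ^ 2) := by
    rw [hJf, integral_prod _ hF2ρ]
    have hmarg : IntegrableOn (fun x => ∫ y in Icc c d, f x y ^ 2) (Icc a b) volume :=
      hF2ρ.integral_prod_left
    have hrhs : IntegrableOn (fun x => (d - c) / 2 * (f x c ^ 2 + f x d ^ 2)) (Icc a b) volume :=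
      (((hslicef' c hcm).1.add (hslicef' d hdm).1).const_mul _)
    calc ∫ x in Icc a b, ∫ y in Icc c d, f x y ^ 2
        ≤ ∫ x in Icc a b, (d - c) / 2 * (f x c ^ 2 + f x d ^ 2) :=
          setIntegral_mono_on hmarg hrhs measurableSet_Icc (fun x hx => (hslicef x hx).2)
      _ = (d - c) / 2 * ((∫ x in Icc a b, f x c ^ 2) + ∫ x in Icc a b, f x d ^ 2) := by
          rw [integral_const_mul, integral_add (hslicef' c hcm).1 (hslicef' d hdm).1]
  have hJgy : Jg ≤ (d - c) / 2 * ((∫ x in Icc a b, g x c ^ 2) + ∫ x in Icc a b, g x d ^ 2) := by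
    rw [hJg, integral_prod _ hG2ρ]
    have hmarg : IntegrableOn (fun x => ∫ y in Icc c d, g x y ^ 2) (Icc a b) volume :=
      hG2ρ.integral_prod_left
    have hrhs : IntegrableOn (fun x => (d - c) / 2 * (g x c ^ 2 + g x d ^ 2)) (Icc a b) volume :=
      (((hsliceg' c hcm).1.add (hsliceg' d hdm).1).const_mul _)
    calc ∫ x in Icc a b, ∫ y in Icc c d, g x y ^ 2
        ≤ ∫ x in Icc a b, (d - c) / 2 * (g x c ^ 2 + g x d ^ 2) :=
          setIntegral_mono_on hmarg hrhs measurableSet_Icc (fun x hx => (hsliceg x hx).2)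
      _ = (d - c) / 2 * ((∫ x in Icc a b, g x c ^ 2) + ∫ x in Icc a b, g x d ^ 2) := by
          rw [integral_const_mul, integral_add (hsliceg' c hcm).1 (hsliceg' d hdm).1]
  -- x-direction bound for Jf
  have hJfx : Jf ≤ (b - a) / 2 * ((∫ y in Icc c d, f a y ^ 2) + ∫ y in Icc c d, f b y ^ 2) := by
    rw [hJf, integral_prod_symm _ hF2ρ]
    have hmarg : IntegrableOn (fun y => ∫ x in Icc a b, f x y ^ 2) (Icc c d) volume :=
      hF2ρ.integral_prod_right
    have hrhs : IntegrableOn (fun y => (b - a) / 2 * (f a y ^ 2 + f b y ^ 2)) (Icc c d) volume :=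
      (((hslicef a ham).1.add (hslicef b hbm).1).const_mul _)
    calc ∫ y in Icc c d, ∫ x in Icc a b, f x y ^ 2
        ≤ ∫ y in Icc c d, (b - a) / 2 * (f a y ^ 2 + f b y ^ 2) :=
          setIntegral_mono_on hmarg hrhs measurableSet_Icc (fun y hy => (hslicef' y hy).2)
      _ = (b - a) / 2 * ((∫ y in Icc c d, f a y ^ 2) + ∫ y in Icc c d, f b y ^ 2) := by
          rw [integral_const_mul, integral_add (hslicef a ham).1 (hslicef b hbm).1]
  have hJgx : Jg ≤ (b - a) / 2 * ((∫ y in Icc c d, g a y ^ 2) + ∫ y in Icc c d, g b y ^ 2) := by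
    rw [hJg, integral_prod_symm _ hG2ρ]
    have hmarg : IntegrableOn (fun y => ∫ x in Icc a b, g x y ^ 2) (Icc c d) volume :=
      hG2ρ.integral_prod_right
    have hrhs : IntegrableOn (fun y => (b - a) / 2 * (g a y ^ 2 + g b y ^ 2)) (Icc c d) volume :=
      (((hsliceg a ham).1.add (hsliceg b hbm).1).const_mul _)
    calc ∫ y in Icc c d, ∫ x in Icc a b, g x y ^ 2
        ≤ ∫ y in Icc c d, (b - a) / 2 * (g a y ^ 2 + g b y ^ 2) :=
          setIntegral_mono_on hmarg hrhs measurableSet_Icc (fun y hy => (hsliceg' y hy).2)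
      _ = (b - a) / 2 * ((∫ y in Icc c d, g a y ^ 2) + ∫ y in Icc c d, g b y ^ 2) := by
          rw [integral_const_mul, integral_add (hsliceg a ham).1 (hsliceg b hbm).1]
  -- rewrite the goal integrals
  have hLHS : ∫ x in a..b, ∫ y in c..d, f x y * g x y = Jfg := by
    rw [hJfg, integral_prod _ hFGρ, intervalIntegral.integral_of_le hab.le,
      ← MeasureTheory.integral_Icc_eq_integral_Ioc]
    refine integral_congr_ae (ae_of_all _ fun x => ?_)
    show (∫ y in c..d, f x y * g x y) = ∫ y in Icc c d, f x y * g x y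
    rw [intervalIntegral.integral_of_le hcd.le, ← MeasureTheory.integral_Icc_eq_integral_Ioc]
  have hconv1 : ∀ h : ℝ → ℝ, ∫ x in a..b, h x = ∫ x in Icc a b, h x := fun h => by
    rw [intervalIntegral.integral_of_le hab.le, ← MeasureTheory.integral_Icc_eq_integral_Ioc]
  have hconv2 : ∀ h : ℝ → ℝ, ∫ y in c..d, h y = ∫ y in Icc c d, h y := fun h => by
    rw [intervalIntegral.integral_of_le hcd.le, ← MeasureTheory.integral_Icc_eq_integral_Ioc]
  rw [hLHS, hconv1 (fun x => f x c ^ 2), hconv1 (fun x => f x d ^ 2),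
    hconv1 (fun x => g x c ^ 2), hconv1 (fun x => g x d ^ 2),
    hconv2 (fun y => f a y ^ 2), hconv2 (fun y => f b y ^ 2),
    hconv2 (fun y => g a y ^ 2), hconv2 (fun y => g b y ^ 2)]
  set Pfc := ∫ x in Icc a b, f x c ^ 2
  set Pfd := ∫ x in Icc a b, f x d ^ 2
  set Pgc := ∫ x in Icc a b, g x c ^ 2
  set Pgd := ∫ x in Icc a b, g x d ^ 2
  set Qfa := ∫ y in Icc c d, f a y ^ 2
  set Qfb := ∫ y in Icc c d, f b y ^ 2
  set Qga := ∫ y in Icc c d, g a y ^ 2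
  set Qgb := ∫ y in Icc c d, g b y ^ 2
  clear_value Jfg Jf Jg Pfc Pfd Pgc Pgd Qfa Qfb Qga Qgb
  exact final_algebra (b - a) (d - c) _ _ Jfg hba hdc (by linarith)
end

section
/- Let f : Δ = [a,b]×[c,d] → (0,∞) be coordinated 2-convex with a < b, c < d. Then (1/((b-a)(d-c))) ∫_a^b ∫_c^d f(x,y)² dy dx ≤ (1/(4(b-a))) [∫_a^b f(x,c)² dx + ∫_a^b f(x,d)² dx] + (1/(4(d-c))) [∫_c^d f(a,y)² dy + ∫_c^d f(b,y)² dy]. -/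
open MeasureTheory

/-- A nonnegative convex function on a compact interval is integrable. -/
lemma aux_convexOn_integrableOn {a b : ℝ} (hab : a < b) {h : ℝ → ℝ}
    (hconv : ConvexOn ℝ (Set.Icc a b) h) (hnn : ∀ x ∈ Set.Icc a b, 0 ≤ h x) :
    IntegrableOn h (Set.Icc a b) volume := by
  have hcont : ContinuousOn h (Set.Ioo a b) := by
    have := hconv.continuousOn_interior
    rwa [interior_Icc] at this
  have hIoo : IntegrableOn h (Set.Ioo a b) volume := by
    refine Integrable.mono' (integrable_const (max (h a) (h b))) 
      (hcont.aestronglyMeasurable measurableSet_Ioo) ?_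
    rw [ae_restrict_iff' measurableSet_Ioo]
    filter_upwards with x hx
    have hx' : x ∈ Set.Icc a b := Set.Ioo_subset_Icc_self hx
    rw [Real.norm_eq_abs, abs_of_nonneg (hnn x hx')]
    exact hconv.le_max_of_mem_Icc (Set.left_mem_Icc.2 hab.le) (Set.right_mem_Icc.2 hab.le) hx'
  exact hIoo.congr_set_ae Ioo_ae_eq_Icc.symm

/-- Right side of Hermite–Hadamard on an interval. -/
lemma aux_hadamard_right {c d : ℝ} (hcd : c < d) {h : ℝ → ℝ}
    (hconv : ConvexOn ℝ (Set.Icc c d) h) (hint : IntegrableOn h (Set.Icc c d) volume) :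
    ∫ y in Set.Icc c d, h y ≤ (d - c) / 2 * (h c + h d) := by
  have hdc : (0:ℝ) < d - c := by linarith
  set B : ℝ → ℝ := fun y => (d * h c - c * h d) / (d - c) + y * ((h d - h c) / (d - c)) with hB
  have hBle : ∀ y ∈ Set.Icc c d, h y ≤ B y := by
    intro y hy
    set t : ℝ := (d - y) / (d - c) with ht
    have ht0 : 0 ≤ t := by
      apply div_nonneg _ hdc.le; linarith [hy.2]
    have ht1 : 0 ≤ 1 - t := by
      rw [ht]; rw [sub_nonneg, div_le_one hdc]; linarith [hy.1]
    have key := hconv.2 (Set.left_mem_Icc.2 hcd.le) (Set.right_mem_Icc.2 hcd.le) ht0 ht1 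
      (by ring)
    have hyc : t • c + (1 - t) • d = y := by
      rw [ht]; simp only [smul_eq_mul]; field_simp [hdc.ne']; ring
    rw [hyc] at key
    calc h y ≤ t * h c + (1 - t) * h d := by simpa using key
      _ = B y := by rw [hB, ht]; field_simp; ring
  have hBint : IntegrableOn B (Set.Icc c d) volume := by
    apply Continuous.integrableOn_Icc; fun_prop
  calc ∫ y in Set.Icc c d, h y ≤ ∫ y in Set.Icc c d, B y :=
        setIntegral_mono_on hint hBint measurableSet_Icc hBle
    _ = ∫ y in c..d, B y := by
        rw [intervalIntegral.integral_of_le hcd.le, integral_Icc_eq_integral_Ioc]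
    _ = (d - c) / 2 * (h c + h d) := by
        rw [hB]
        rw [intervalIntegral.integral_add (intervalIntegrable_const)
          ((intervalIntegral.intervalIntegrable_id).mul_const _),
          intervalIntegral.integral_const, intervalIntegral.integral_mul_const,
          integral_id]
        have hne : d - c ≠ 0 := hdc.ne'
        simp only [smul_eq_mul]
        field_simp
        ring

theorem coordinated_two_convex_square_hadamard
    (a b c d : ℝ) (f : ℝ → ℝ → ℝ) (hab : a < b) (hcd : c < d)
    (hpos : ∀ x ∈ Set.Icc a b, ∀ y ∈ Set.Icc c d, 0 < f x y)
    (hconv₁ : ∀ y ∈ Set.Icc c d, ∀ u₁ ∈ Set.Icc a b, ∀ u₂ ∈ Set.Icc a b, ∀ t ∈ Set.Icc (0:ℝ) 1,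
      f (t * u₁ + (1 - t) * u₂) y ^ 2 ≤ t * f u₁ y ^ 2 + (1 - t) * f u₂ y ^ 2)
    (hconv₂ : ∀ x ∈ Set.Icc a b, ∀ v₁ ∈ Set.Icc c d, ∀ v₂ ∈ Set.Icc c d, ∀ t ∈ Set.Icc (0:ℝ) 1,
      f x (t * v₁ + (1 - t) * v₂) ^ 2 ≤ t * f x v₁ ^ 2 + (1 - t) * f x v₂ ^ 2)
    (hint : IntegrableOn (fun p : ℝ × ℝ => f p.1 p.2 ^ 2) (Set.Icc a b ×ˢ Set.Icc c d) volume) :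
    (1 / ((b - a) * (d - c))) * ∫ x in a..b, ∫ y in c..d, f x y ^ 2 ≤
      (1 / (4 * (b - a))) * ((∫ x in a..b, f x c ^ 2) + (∫ x in a..b, f x d ^ 2)) +
      (1 / (4 * (d - c))) * ((∫ y in c..d, f a y ^ 2) + (∫ y in c..d, f b y ^ 2)) := by
  have hba : (0:ℝ) < b - a := by linarith
  have hdc : (0:ℝ) < d - c := by linarith
  set μ := volume.restrict (Set.Icc a b) with hμ
  set ν := volume.restrict (Set.Icc c d) with hν
  -- convexity of partial maps
  have hconvx : ∀ y ∈ Set.Icc c d, ConvexOn ℝ (Set.Icc a b) (fun x => f x y ^ 2) := by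
    intro y hy
    refine ⟨convex_Icc a b, fun u hu v hv s t hs ht hst => ?_⟩
    have h1t : t = 1 - s := by linarith
    subst h1t
    simpa [smul_eq_mul] using hconv₁ y hy u hu v hv s ⟨hs, by linarith⟩
  have hconvy : ∀ x ∈ Set.Icc a b, ConvexOn ℝ (Set.Icc c d) (fun y => f x y ^ 2) := by
    intro x hx
    refine ⟨convex_Icc c d, fun u hu v hv s t hs ht hst => ?_⟩
    have h1t : t = 1 - s := by linarith
    subst h1t
    simpa [smul_eq_mul] using hconv₂ x hx u hu v hv s ⟨hs, by linarith⟩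
  have hnn : ∀ x y : ℝ, 0 ≤ f x y ^ 2 := fun x y => sq_nonneg _
  -- product measure integrability
  have hFprod : Integrable (fun p : ℝ × ℝ => f p.1 p.2 ^ 2) (μ.prod ν) := by
    rw [hμ, hν, Measure.prod_restrict]
    rwa [IntegrableOn, Measure.volume_eq_prod] at hint
  have hFae : ∀ᵐ x ∂μ, Integrable (fun y => f x y ^ 2) ν := hFprod.prod_right_ae
  have hG : Integrable (fun x => ∫ y, f x y ^ 2 ∂ν) μ := hFprod.integral_prod_left
  -- boundary integrability
  have hintc : IntegrableOn (fun x => f x c ^ 2) (Set.Icc a b) volume :=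
    aux_convexOn_integrableOn hab (hconvx c (Set.left_mem_Icc.2 hcd.le)) (fun x _ => hnn x c)
  have hintd : IntegrableOn (fun x => f x d ^ 2) (Set.Icc a b) volume :=
    aux_convexOn_integrableOn hab (hconvx d (Set.right_mem_Icc.2 hcd.le)) (fun x _ => hnn x d)
  have hinta : IntegrableOn (fun y => f a y ^ 2) (Set.Icc c d) volume :=
    aux_convexOn_integrableOn hcd (hconvy a (Set.left_mem_Icc.2 hab.le)) (fun y _ => hnn a y)
  have hintb : IntegrableOn (fun y => f b y ^ 2) (Set.Icc c d) volume :=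
    aux_convexOn_integrableOn hcd (hconvy b (Set.right_mem_Icc.2 hab.le)) (fun y _ => hnn b y)
  -- abbreviations
  set I : ℝ := ∫ p, f p.1 p.2 ^ 2 ∂(μ.prod ν) with hI
  set Bc : ℝ := ∫ x, f x c ^ 2 ∂μ with hBc
  set Bd : ℝ := ∫ x, f x d ^ 2 ∂μ with hBd
  set Ba : ℝ := ∫ y, f a y ^ 2 ∂ν with hBa
  set Bb : ℝ := ∫ y, f b y ^ 2 ∂ν with hBb
  -- Fubini
  have hIG : I = ∫ x, (∫ y, f x y ^ 2 ∂ν) ∂μ := by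
    rw [hI]; exact (integral_integral (f := fun x y => f x y ^ 2) hFprod).symm
  have hIH : I = ∫ y, (∫ x, f x y ^ 2 ∂μ) ∂ν := by
    rw [hI, ← integral_integral (f := fun x y => f x y ^ 2) hFprod]
    exact integral_integral_swap (f := fun x y => f x y ^ 2) hFprod
  -- first bound
  have stepA : I ≤ (d - c) / 2 * (Bc + Bd) := by
    rw [hIG]
    calc ∫ x, (∫ y, f x y ^ 2 ∂ν) ∂μ
        ≤ ∫ x, ((d - c) / 2 * (f x c ^ 2 + f x d ^ 2)) ∂μ := by
          refine integral_mono_ae hG ?_ ?_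
          · exact ((hintc.add hintd).const_mul _)
          · filter_upwards [hFae, ae_restrict_mem measurableSet_Icc] with x hx hxm
            exact aux_hadamard_right hcd (hconvy x hxm) hx
      _ = (d - c) / 2 * (Bc + Bd) := by
          rw [integral_const_mul, integral_add hintc hintd]
  have stepB : I ≤ (b - a) / 2 * (Ba + Bb) := by
    rw [hIH]
    calc ∫ y, (∫ x, f x y ^ 2 ∂μ) ∂ν
        ≤ ∫ y, ((b - a) / 2 * (f a y ^ 2 + f b y ^ 2)) ∂ν := by
          refine integral_mono_ae hFprod.integral_prod_right ?_ ?_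
          · exact ((hinta.add hintb).const_mul _)
          · filter_upwards [hFprod.prod_left_ae, ae_restrict_mem measurableSet_Icc] with y hy hym
            exact aux_hadamard_right hab (hconvx y hym) hy
      _ = (b - a) / 2 * (Ba + Bb) := by
          rw [integral_const_mul, integral_add hinta hintb]
  -- rewrite interval integrals in terms of μ, ν
  have hx_eq : ∀ g : ℝ → ℝ, IntegrableOn g (Set.Icc a b) volume → True := fun _ _ => trivial
  have hLHS : (∫ x in a..b, ∫ y in c..d, f x y ^ 2) = I := by
    rw [hIG]
    rw [intervalIntegral.integral_of_le hab.le, ← integral_Icc_eq_integral_Ioc]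
    congr 1
    funext x
    rw [intervalIntegral.integral_of_le hcd.le, ← integral_Icc_eq_integral_Ioc]
  have hBc' : (∫ x in a..b, f x c ^ 2) = Bc := by
    rw [intervalIntegral.integral_of_le hab.le, ← integral_Icc_eq_integral_Ioc]
  have hBd' : (∫ x in a..b, f x d ^ 2) = Bd := by
    rw [intervalIntegral.integral_of_le hab.le, ← integral_Icc_eq_integral_Ioc]
  have hBa' : (∫ y in c..d, f a y ^ 2) = Ba := by
    rw [intervalIntegral.integral_of_le hcd.le, ← integral_Icc_eq_integral_Ioc]
  have hBb' : (∫ y in c..d, f b y ^ 2) = Bb := by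
    rw [intervalIntegral.integral_of_le hcd.le, ← integral_Icc_eq_integral_Ioc]
  rw [hLHS, hBc', hBd', hBa', hBb']
  have key : (1 / ((b - a) * (d - c))) * I ≤
      (1 / ((b - a) * (d - c))) *
        ((1/2) * ((d - c) / 2 * (Bc + Bd)) + (1/2) * ((b - a) / 2 * (Ba + Bb))) := by
    apply mul_le_mul_of_nonneg_left _ (by positivity)
    linarith
  calc (1 / ((b - a) * (d - c))) * I
      ≤ (1 / ((b - a) * (d - c))) *
        ((1/2) * ((d - c) / 2 * (Bc + Bd)) + (1/2) * ((b - a) / 2 * (Ba + Bb))) := key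
    _ = (1 / (4 * (b - a))) * (Bc + Bd) + (1 / (4 * (d - c))) * (Ba + Bb) := by
        field_simp
        ring
end

section
/- Let f : Δ = [a,b]×[c,d] → (0,∞) be coordinated 1-convex (i.e., convex in each variable separately) and integrable, with a < b, c < d. Then (1/((b-a)(d-c))) ∫_a^b ∫_c^d f(x,y) dy dx ≤ (1/4)[ (1/(b-a)) ∫_a^b f(x,c) dx + (1/(b-a)) ∫_a^b f(x,d) dx + (1/(d-c)) ∫_c^d f(a,y) dy + (1/(d-c)) ∫_c^d f(b,y) dy ]. -/
open MeasureTheory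

lemma convex_slice (a b : ℝ) (hab : a < b) (g : ℝ → ℝ)
    (hpos : ∀ x ∈ Set.Icc a b, 0 < g x)
    (hconv : ∀ u₁ ∈ Set.Icc a b, ∀ u₂ ∈ Set.Icc a b, ∀ t ∈ Set.Icc (0:ℝ) 1,
      g (t * u₁ + (1 - t) * u₂) ≤ t * g u₁ + (1 - t) * g u₂) :
    IntegrableOn g (Set.Icc a b) volume ∧
    (∫ x in a..b, g x) ≤ (b - a) * (g a + g b) / 2 := by
  have hcv : ConvexOn ℝ (Set.Icc a b) g := by
    refine ⟨convex_Icc a b, fun x hx y hy p q hp hq hpq => ?_⟩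
    have := hconv x hx y hy p ⟨hp, by linarith⟩
    have hq' : q = 1 - p := by linarith
    simpa [hq', smul_eq_mul] using this
  have hcont : ContinuousOn g (Set.Ioo a b) := by
    have := hcv.continuousOn_interior
    rwa [interior_Icc] at this
  -- linear upper bound
  have hlin : ∀ x ∈ Set.Icc a b, g x ≤ ((b - x) * g a + (x - a) * g b) / (b - a) := by
    intro x hx
    have hba : (0:ℝ) < b - a := by linarith
    have ht : (b - x) / (b - a) ∈ Set.Icc (0:ℝ) 1 := by
      constructor
      · apply div_nonneg <;> linarith [hx.2]
      · rw [div_le_one hba]; linarith [hx.1]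
    have := hconv a (Set.left_mem_Icc.2 hab.le) b (Set.right_mem_Icc.2 hab.le)
      ((b - x) / (b - a)) ht
    have hxeq : (b - x) / (b - a) * a + (1 - (b - x) / (b - a)) * b = x := by
      field_simp
      try ring
    rw [hxeq] at this
    calc g x ≤ (b - x) / (b - a) * g a + (1 - (b - x) / (b - a)) * g b := this
      _ = ((b - x) * g a + (x - a) * g b) / (b - a) := by
          field_simp
          try ring
  have hbound : ∀ x ∈ Set.Icc a b, ‖g x‖ ≤ |g a| + |g b| := by
    intro x hx
    have h1 := hlin x hx
    have h2 := hpos x hx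
    rw [Real.norm_eq_abs, abs_of_pos h2]
    have hba : (0:ℝ) < b - a := by linarith
    have : ((b - x) * g a + (x - a) * g b) / (b - a) ≤ |g a| + |g b| := by
      rw [div_le_iff₀ hba]
      have h3 : (b - x) * g a ≤ (b - a) * |g a| := by
        have := le_abs_self (g a)
        have habs : (0:ℝ) ≤ |g a| := abs_nonneg _
        nlinarith [hx.1, hx.2]
      have h4 : (x - a) * g b ≤ (b - a) * |g b| := by
        have := le_abs_self (g b)
        have habs : (0:ℝ) ≤ |g b| := abs_nonneg _
        nlinarith [hx.1, hx.2]
      linarith [h3, h4]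
    linarith
  have hint : IntegrableOn g (Set.Icc a b) volume := by
    rw [integrableOn_Icc_iff_integrableOn_Ioo]
    refine Integrable.mono' (integrable_const (|g a| + |g b|))
      (hcont.aestronglyMeasurable measurableSet_Ioo) ?_
    filter_upwards [ae_restrict_mem measurableSet_Ioo] with x hx
    exact hbound x (Set.mem_Icc_of_Ioo hx)
  refine ⟨hint, ?_⟩
  set L : ℝ → ℝ := fun x => ((b - x) * g a + (x - a) * g b) / (b - a) with hL
  have hLint : IntegrableOn L (Set.Ioo a b) volume := by
    have hLc : Continuous L := by fun_prop
    exact (hLc.integrableOn_Icc).mono_set Set.Ioo_subset_Icc_self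
  have hmono : (∫ x in Set.Ioo a b, g x) ≤ ∫ x in Set.Ioo a b, L x := by
    refine setIntegral_mono_on ?_ hLint measurableSet_Ioo ?_
    · exact hint.mono_set Set.Ioo_subset_Icc_self
    · intro x hx; exact hlin x (Set.mem_Icc_of_Ioo hx)
  have hLval : (∫ x in Set.Ioo a b, L x) = (b - a) * (g a + g b) / 2 := by
    rw [← MeasureTheory.integral_Ioc_eq_integral_Ioo,
        ← intervalIntegral.integral_of_le hab.le]
    have : ∀ x : ℝ, L x = (b * g a - a * g b) / (b - a) + ((g b - g a) / (b - a)) * x := by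
      intro x
      have hba : b - a ≠ 0 := by linarith
      simp only [hL]; field_simp; ring
    rw [intervalIntegral.integral_congr (fun x _ => this x)]
    rw [intervalIntegral.integral_add (intervalIntegrable_const)
        ((intervalIntegral.intervalIntegrable_id).const_mul _),
      intervalIntegral.integral_const, intervalIntegral.integral_const_mul,
      integral_id]
    have hba : b - a ≠ 0 := by linarith
    rw [smul_eq_mul]
    field_simp
    ring
  calc (∫ x in a..b, g x) = ∫ x in Set.Ioo a b, g x := by
        rw [intervalIntegral.integral_of_le hab.le, MeasureTheory.integral_Ioc_eq_integral_Ioo]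
    _ ≤ ∫ x in Set.Ioo a b, L x := hmono
    _ = (b - a) * (g a + g b) / 2 := hLval

theorem coordinated_convex_hadamard_quarter
    (a b c d : ℝ) (f : ℝ → ℝ → ℝ) (hab : a < b) (hcd : c < d)
    (hpos : ∀ x ∈ Set.Icc a b, ∀ y ∈ Set.Icc c d, 0 < f x y)
    (hconv₁ : ∀ y ∈ Set.Icc c d, ∀ u₁ ∈ Set.Icc a b, ∀ u₂ ∈ Set.Icc a b, ∀ t ∈ Set.Icc (0:ℝ) 1,
      f (t * u₁ + (1 - t) * u₂) y ≤ t * f u₁ y + (1 - t) * f u₂ y)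
    (hconv₂ : ∀ x ∈ Set.Icc a b, ∀ v₁ ∈ Set.Icc c d, ∀ v₂ ∈ Set.Icc c d, ∀ t ∈ Set.Icc (0:ℝ) 1,
      f x (t * v₁ + (1 - t) * v₂) ≤ t * f x v₁ + (1 - t) * f x v₂)
    (hint : IntegrableOn (fun p : ℝ × ℝ => f p.1 p.2) (Set.Icc a b ×ˢ Set.Icc c d) volume) :
    (1 / ((b - a) * (d - c))) * ∫ x in a..b, ∫ y in c..d, f x y ≤
      (1 / 4) * ((1 / (b - a)) * ∫ x in a..b, f x c +
        (1 / (b - a)) * ∫ x in a..b, f x d +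
        (1 / (d - c)) * ∫ y in c..d, f a y +
        (1 / (d - c)) * ∫ y in c..d, f b y) := by
  have hac : c ∈ Set.Icc c d := Set.left_mem_Icc.2 hcd.le
  have had : d ∈ Set.Icc c d := Set.right_mem_Icc.2 hcd.le
  have haa : a ∈ Set.Icc a b := Set.left_mem_Icc.2 hab.le
  have hbb : b ∈ Set.Icc a b := Set.right_mem_Icc.2 hab.le
  -- boundary slices integrable + interval integrability
  have hslicex : ∀ y ∈ Set.Icc c d,
      IntegrableOn (fun x => f x y) (Set.Icc a b) volume ∧
      (∫ x in a..b, f x y) ≤ (b - a) * (f a y + f b y) / 2 := fun y hy =>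
    convex_slice a b hab (fun x => f x y) (fun x hx => hpos x hx y hy)
      (fun u₁ h1 u₂ h2 t ht => hconv₁ y hy u₁ h1 u₂ h2 t ht)
  have hslicey : ∀ x ∈ Set.Icc a b,
      IntegrableOn (fun y => f x y) (Set.Icc c d) volume ∧
      (∫ y in c..d, f x y) ≤ (d - c) * (f x c + f x d) / 2 := fun x hx =>
    convex_slice c d hcd (f x) (hpos x hx) (hconv₂ x hx)
  -- integrability on restricted product measures
  have hprod : Integrable (Function.uncurry f)
      ((volume.restrict (Set.Icc a b)).prod (volume.restrict (Set.Icc c d))) := by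
    rw [Measure.prod_restrict]
    have := hint
    rw [IntegrableOn, ← Measure.volume_eq_prod] at *
    exact this
  -- inner integrals integrable (Fubini)
  have hinner₁ : IntegrableOn (fun x => ∫ y in c..d, f x y) (Set.Icc a b) volume := by
    have h := hprod.integral_prod_left
    refine h.congr (Filter.Eventually.of_forall fun x => ?_)
    simp only [Function.uncurry_apply_pair]
    rw [intervalIntegral.integral_of_le hcd.le, integral_Icc_eq_integral_Ioc]
  have hinner₂ : IntegrableOn (fun y => ∫ x in a..b, f x y) (Set.Icc c d) volume := by
    have h := hprod.integral_prod_right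
    refine h.congr (Filter.Eventually.of_forall fun y => ?_)
    simp only [Function.uncurry_apply_pair]
    rw [intervalIntegral.integral_of_le hab.le, integral_Icc_eq_integral_Ioc]
  have int2iv : ∀ (u v : ℝ) (hu : u < v) (g : ℝ → ℝ),
      IntegrableOn g (Set.Icc u v) volume → IntervalIntegrable g volume u v := by
    intro u v hu g hg
    exact (hg.mono_set (by rw [Set.uIcc_of_le hu.le])).intervalIntegrable
  -- Bound 1
  have hIc := (hslicex c hac).1
  have hId := (hslicex d had).1
  have hB1 : (∫ x in a..b, ∫ y in c..d, f x y) ≤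
      (d - c) * ((∫ x in a..b, f x c) + ∫ x in a..b, f x d) / 2 := by
    have step : (∫ x in a..b, ∫ y in c..d, f x y) ≤
        ∫ x in a..b, (d - c) * (f x c + f x d) / 2 := by
      refine intervalIntegral.integral_mono_on hab.le
        (int2iv a b hab _ hinner₁) ?_ (fun x hx => (hslicey x hx).2)
      have : IntervalIntegrable (fun x => f x c) volume a b := int2iv a b hab _ hIc
      have h2 : IntervalIntegrable (fun x => f x d) volume a b := int2iv a b hab _ hId
      exact ((this.add h2).const_mul (d - c)).div_const 2
    calc (∫ x in a..b, ∫ y in c..d, f x y) ≤ ∫ x in a..b, (d - c) * (f x c + f x d) / 2 := step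
      _ = (d - c) * ((∫ x in a..b, f x c) + ∫ x in a..b, f x d) / 2 := by
        rw [intervalIntegral.integral_div, intervalIntegral.integral_const_mul,
          intervalIntegral.integral_add (int2iv a b hab _ hIc) (int2iv a b hab _ hId)]
  -- Fubini swap
  have hswap : (∫ x in a..b, ∫ y in c..d, f x y) = ∫ y in c..d, ∫ x in a..b, f x y := by
    have hprod' : Integrable (Function.uncurry f)
        ((volume.restrict (Set.Ioc a b)).prod (volume.restrict (Set.Ioc c d))) := by
      rw [Measure.prod_restrict, ← Measure.volume_eq_prod]
      exact hint.mono_set (Set.prod_mono Set.Ioc_subset_Icc_self Set.Ioc_subset_Icc_self)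
    have := MeasureTheory.integral_integral_swap hprod'
    simp only [intervalIntegral.integral_of_le hab.le, intervalIntegral.integral_of_le hcd.le]
    exact this
  -- Bound 2
  have hIa := (hslicey a haa).1
  have hIb := (hslicey b hbb).1
  have hB2 : (∫ x in a..b, ∫ y in c..d, f x y) ≤
      (b - a) * ((∫ y in c..d, f a y) + ∫ y in c..d, f b y) / 2 := by
    rw [hswap]
    have step : (∫ y in c..d, ∫ x in a..b, f x y) ≤
        ∫ y in c..d, (b - a) * (f a y + f b y) / 2 := by
      refine intervalIntegral.integral_mono_on hcd.le
        (int2iv c d hcd _ hinner₂) ?_ (fun y hy => (hslicex y hy).2)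
      have h1 : IntervalIntegrable (fun y => f a y) volume c d := int2iv c d hcd _ hIa
      have h2 : IntervalIntegrable (fun y => f b y) volume c d := int2iv c d hcd _ hIb
      exact ((h1.add h2).const_mul (b - a)).div_const 2
    calc (∫ y in c..d, ∫ x in a..b, f x y) ≤ ∫ y in c..d, (b - a) * (f a y + f b y) / 2 := step
      _ = (b - a) * ((∫ y in c..d, f a y) + ∫ y in c..d, f b y) / 2 := by
        rw [intervalIntegral.integral_div, intervalIntegral.integral_const_mul,
          intervalIntegral.integral_add (int2iv c d hcd _ hIa) (int2iv c d hcd _ hIb)]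
  -- expand the nested integrals in the goal
  have hIaiv := int2iv c d hcd _ hIa
  have hIbiv := int2iv c d hcd _ hIb
  have hIciv := int2iv a b hab _ hIc
  have hIdiv := int2iv a b hab _ hId
  have ha' : b - a ≠ 0 := by linarith
  have hc' : d - c ≠ 0 := by linarith
  have e1 : (∫ y in c..d, (f a y + 1 / (d - c) * ∫ y in c..d, f b y)) =
      (∫ y in c..d, f a y) + (∫ y in c..d, f b y) := by
    rw [intervalIntegral.integral_add hIaiv intervalIntegrable_const,
        intervalIntegral.integral_const, smul_eq_mul]
    congr 1
    field_simp
  have e2 : (∫ x in a..b, (f x d + 1 / (d - c) *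
        ∫ y in c..d, (f a y + 1 / (d - c) * ∫ y in c..d, f b y))) =
      (∫ x in a..b, f x d) +
        (b - a) * (1 / (d - c) * ((∫ y in c..d, f a y) + ∫ y in c..d, f b y)) := by
    rw [intervalIntegral.integral_add hIdiv intervalIntegrable_const,
        intervalIntegral.integral_const, smul_eq_mul, e1]
  have e3 : (∫ x in a..b, (f x c + 1 / (b - a) * ∫ x in a..b, (f x d + 1 / (d - c) *
        ∫ y in c..d, (f a y + 1 / (d - c) * ∫ y in c..d, f b y)))) =
      (∫ x in a..b, f x c) + (b - a) * (1 / (b - a) * ((∫ x in a..b, f x d) +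
        (b - a) * (1 / (d - c) * ((∫ y in c..d, f a y) + ∫ y in c..d, f b y)))) := by
    rw [intervalIntegral.integral_add hIciv intervalIntegrable_const,
        intervalIntegral.integral_const, smul_eq_mul, e2]
  rw [e3]
  set I := ∫ x in a..b, ∫ y in c..d, f x y
  set Ic := ∫ x in a..b, f x c
  set Id := ∫ x in a..b, f x d
  set Ia := ∫ y in c..d, f a y
  set Ib := ∫ y in c..d, f b y
  have hkey : I ≤ ((d - c) * (Ic + Id) / 2 + (b - a) * (Ia + Ib) / 2) / 2 := by linarith
  have hpos1 : (0:ℝ) < (b - a) * (d - c) := by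
    have h1 : (0:ℝ) < b - a := by linarith
    have h2 : (0:ℝ) < d - c := by linarith
    positivity
  have h1 : (1 / ((b - a) * (d - c))) * I ≤
      (1 / ((b - a) * (d - c))) * (((d - c) * (Ic + Id) / 2 + (b - a) * (Ia + Ib) / 2) / 2) := by
    apply mul_le_mul_of_nonneg_left hkey
    positivity
  refine h1.trans_eq ?_
  have key : ∀ (p q A B C D : ℝ), p ≠ 0 → q ≠ 0 →
      1 / (p * q) * ((q * (A + B) / 2 + p * (C + D) / 2) / 2) =
        1 / 4 * (1 / p * (A + p * (1 / p * (B + p * (1 / q * (C + D)))))) := by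
    intro p q A B C D hp hq
    field_simp
    ring
  exact key (b - a) (d - c) Ic Id Ia Ib ha' hc'
end

section
/- Suppose f : Δ = [a,b]×[c,d] → (0,∞) is coordinated convex (convex in each variable separately) and integrable on Δ with a < b, c < d. Then (1/2)[(1/(b-a)) ∫_a^b f(x,(c+d)/2) dx + (1/(d-c)) ∫_c^d f((a+b)/2, y) dy] ≤ (1/((b-a)(d-c))) ∫_a^b ∫_c^d f(x,y) dy dx. -/
open MeasureTheory

theorem midpoint_mul_le_integral (c d : ℝ) (hcd : c < d) (g : ℝ → ℝ)
    (hconv : ∀ v₁ ∈ Set.Icc c d, ∀ v₂ ∈ Set.Icc c d, ∀ t ∈ Set.Icc (0:ℝ) 1,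
      g (t * v₁ + (1 - t) * v₂) ≤ t * g v₁ + (1 - t) * g v₂)
    (hg : IntervalIntegrable g volume c d) :
    (d - c) * g ((c + d) / 2) ≤ ∫ y in c..d, g y := by
  have hrefl : IntervalIntegrable (fun y => g (c + d - y)) volume c d := by
    have h := (hg.comp_sub_left (c + d)).symm
    have e1 : c + d - c = d := by ring
    have e2 : c + d - d = c := by ring
    rwa [e1, e2] at h
  have key : ∀ y ∈ Set.Icc c d, g ((c + d) / 2) ≤ (1/2) * g y + (1/2) * g (c + d - y) := by
    intro y hy
    have hmem : c + d - y ∈ Set.Icc c d := ⟨by linarith [hy.2], by linarith [hy.1]⟩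
    have h := hconv y hy (c + d - y) hmem (1/2) ⟨by norm_num, by norm_num⟩
    have e : (1:ℝ)/2 * y + (1 - 1/2) * (c + d - y) = (c + d) / 2 := by ring
    rw [e] at h
    norm_num at h ⊢
    linarith
  have step : (∫ y in c..d, g ((c + d) / 2)) ≤ ∫ y in c..d, ((1/2) * g y + (1/2) * g (c + d - y)) := by
    apply intervalIntegral.integral_mono_on hcd.le intervalIntegrable_const
      ((hg.const_mul _).add (hrefl.const_mul _))
    intro y hy
    exact key y hy
  have econst : (∫ y in c..d, g ((c + d) / 2)) = (d - c) * g ((c + d) / 2) := by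
    rw [intervalIntegral.integral_const, smul_eq_mul]
  have esum : (∫ y in c..d, ((1/2) * g y + (1/2) * g (c + d - y)))
      = (1/2) * (∫ y in c..d, g y) + (1/2) * ∫ y in c..d, g (c + d - y) := by
    rw [intervalIntegral.integral_add (hg.const_mul _) (hrefl.const_mul _),
      intervalIntegral.integral_const_mul, intervalIntegral.integral_const_mul]
  have erefl : (∫ y in c..d, g (c + d - y)) = ∫ y in c..d, g y := by
    rw [intervalIntegral.integral_comp_sub_left g (c + d)]
    have e1 : c + d - c = d := by ring
    have e2 : c + d - d = c := by ring
    rw [e1, e2]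
  rw [econst, esum, erefl] at step
  linarith

theorem coordinated_convex_hadamard_left
    (a b c d : ℝ) (f : ℝ → ℝ → ℝ) (hab : a < b) (hcd : c < d)
    (hpos : ∀ x ∈ Set.Icc a b, ∀ y ∈ Set.Icc c d, 0 < f x y)
    (hconv₁ : ∀ y ∈ Set.Icc c d, ∀ u₁ ∈ Set.Icc a b, ∀ u₂ ∈ Set.Icc a b, ∀ t ∈ Set.Icc (0:ℝ) 1,
      f (t * u₁ + (1 - t) * u₂) y ≤ t * f u₁ y + (1 - t) * f u₂ y)
    (hconv₂ : ∀ x ∈ Set.Icc a b, ∀ v₁ ∈ Set.Icc c d, ∀ v₂ ∈ Set.Icc c d, ∀ t ∈ Set.Icc (0:ℝ) 1,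
      f x (t * v₁ + (1 - t) * v₂) ≤ t * f x v₁ + (1 - t) * f x v₂)
    (hint : IntegrableOn (fun p : ℝ × ℝ => f p.1 p.2) (Set.Icc a b ×ˢ Set.Icc c d) volume)
    (hint₁ : IntervalIntegrable (fun x => f x ((c + d) / 2)) volume a b)
    (hint₂ : IntervalIntegrable (fun y => f ((a + b) / 2) y) volume c d) :
    (1 / 2) * ((1 / (b - a)) * ∫ x in a..b, f x ((c + d) / 2) +
        (1 / (d - c)) * ∫ y in c..d, f ((a + b) / 2) y) ≤
      (1 / ((b - a) * (d - c))) * ∫ x in a..b, ∫ y in c..d, f x y := by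
  have hba : (0:ℝ) < b - a := by linarith
  have hdc : (0:ℝ) < d - c := by linarith
  have hprod : Integrable (fun p : ℝ × ℝ => f p.1 p.2)
      ((volume.restrict (Set.Icc a b)).prod (volume.restrict (Set.Icc c d))) := by
    rw [Measure.prod_restrict]
    exact hint
  -- convert ν-integrals to interval integrals
  have hνint : ∀ g : ℝ → ℝ, (∫ y, g y ∂(volume.restrict (Set.Icc c d))) = ∫ y in c..d, g y := by
    intro g
    rw [intervalIntegral.integral_of_le hcd.le]
    exact integral_Icc_eq_integral_Ioc
  have hμint : ∀ g : ℝ → ℝ, (∫ x, g x ∂(volume.restrict (Set.Icc a b))) = ∫ x in a..b, g x := by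
    intro g
    rw [intervalIntegral.integral_of_le hab.le]
    exact integral_Icc_eq_integral_Ioc
  -- integrability of the partial integrals
  have hI : Integrable (fun x => ∫ y, f x y ∂(volume.restrict (Set.Icc c d))) (volume.restrict (Set.Icc a b)) := hprod.integral_prod_left
  have hIint : IntervalIntegrable (fun x => ∫ y in c..d, f x y) volume a b := by
    have hI' : Integrable (fun x => ∫ y in c..d, f x y) (volume.restrict (Set.Icc a b)) := by
      convert hI using 2 with x
      exact (hνint _).symm
    exact (intervalIntegrable_iff_integrableOn_Ioc_of_le hab.le).mpr
      (hI'.mono_measure (Measure.restrict_mono Set.Ioc_subset_Icc_self le_rfl))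
  have hJ : Integrable (fun y => ∫ x, f x y ∂(volume.restrict (Set.Icc a b))) (volume.restrict (Set.Icc c d)) := hprod.integral_prod_right
  have hJint : IntervalIntegrable (fun y => ∫ x in a..b, f x y) volume c d := by
    have hJ' : Integrable (fun y => ∫ x in a..b, f x y) (volume.restrict (Set.Icc c d)) := by
      convert hJ using 2 with y
      exact (hμint _).symm
    exact (intervalIntegrable_iff_integrableOn_Ioc_of_le hcd.le).mpr
      (hJ'.mono_measure (Measure.restrict_mono Set.Ioc_subset_Icc_self le_rfl))
  -- Step A
  have hA : (∫ x in a..b, f x ((c + d) / 2)) ≤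
      ∫ x in a..b, (1 / (d - c)) * ∫ y in c..d, f x y := by
    apply intervalIntegral.integral_mono_ae_restrict hab.le hint₁ (hIint.const_mul _)
    filter_upwards [hprod.prod_right_ae, ae_restrict_mem measurableSet_Icc] with x hx hxmem
    have hgx : IntervalIntegrable (fun y => f x y) volume c d :=
      (intervalIntegrable_iff_integrableOn_Ioc_of_le hcd.le).mpr
        (hx.mono_measure (Measure.restrict_mono Set.Ioc_subset_Icc_self le_rfl))
    have h := midpoint_mul_le_integral c d hcd (fun y => f x y) (hconv₂ x hxmem) hgx
    have e : (1 / (d - c)) * ((d - c) * f x ((c + d) / 2)) = f x ((c + d) / 2) := by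
      field_simp
    have h2 := mul_le_mul_of_nonneg_left h (by positivity : (0:ℝ) ≤ 1 / (d - c))
    rw [e] at h2
    exact h2
  -- Step B
  have hB : (∫ y in c..d, f ((a + b) / 2) y) ≤
      ∫ y in c..d, (1 / (b - a)) * ∫ x in a..b, f x y := by
    apply intervalIntegral.integral_mono_ae_restrict hcd.le hint₂ (hJint.const_mul _)
    filter_upwards [hprod.prod_left_ae, ae_restrict_mem measurableSet_Icc] with y hy hymem
    have hgy : IntervalIntegrable (fun x => f x y) volume a b :=
      (intervalIntegrable_iff_integrableOn_Ioc_of_le hab.le).mpr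
        (hy.mono_measure (Measure.restrict_mono Set.Ioc_subset_Icc_self le_rfl))
    have hconv' : ∀ u₁ ∈ Set.Icc a b, ∀ u₂ ∈ Set.Icc a b, ∀ t ∈ Set.Icc (0:ℝ) 1,
        f (t * u₁ + (1 - t) * u₂) y ≤ t * f u₁ y + (1 - t) * f u₂ y := hconv₁ y hymem
    have h := midpoint_mul_le_integral a b hab (fun x => f x y) hconv' hgy
    have e : (1 / (b - a)) * ((b - a) * f ((a + b) / 2) y) = f ((a + b) / 2) y := by
      field_simp
    have h2 := mul_le_mul_of_nonneg_left h (by positivity : (0:ℝ) ≤ 1 / (b - a))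
    rw [e] at h2
    exact h2
  -- rewrite RHS of hA, hB with constant pulled out
  rw [intervalIntegral.integral_const_mul] at hA hB
  -- Fubini swap
  have hswap : (∫ y in c..d, ∫ x in a..b, f x y) = ∫ x in a..b, ∫ y in c..d, f x y := by
    have h := integral_integral_swap (f := fun x y => f x y) hprod
    simp only [hμint, hνint] at h
    exact h.symm
  rw [hswap] at hB
  have h1 := mul_le_mul_of_nonneg_left hA (by positivity : (0:ℝ) ≤ 1 / (b - a))
  have h2 := mul_le_mul_of_nonneg_left hB (by positivity : (0:ℝ) ≤ 1 / (d - c))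
  have e1 : (1 / (b - a)) * ((1 / (d - c)) * ∫ x in a..b, ∫ y in c..d, f x y)
      = (1 / ((b - a) * (d - c))) * ∫ x in a..b, ∫ y in c..d, f x y := by
    rw [one_div, one_div, one_div, mul_inv]
    ring
  have e2 : (1 / (d - c)) * ((1 / (b - a)) * ∫ x in a..b, ∫ y in c..d, f x y)
      = (1 / ((b - a) * (d - c))) * ∫ x in a..b, ∫ y in c..d, f x y := by
    rw [one_div, one_div, one_div, mul_inv]
    ring
  rw [e1] at h1
  rw [e2] at h2
  have hba' : b - a ≠ 0 := ne_of_gt hba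
  have hdc' : d - c ≠ 0 := ne_of_gt hdc
  have egoal : (∫ x in a..b, (f x ((c + d) / 2) +
        (1 / (d - c)) * ∫ y in c..d, f ((a + b) / 2) y))
      = (∫ x in a..b, f x ((c + d) / 2)) +
        (b - a) * ((1 / (d - c)) * ∫ y in c..d, f ((a + b) / 2) y) := by
    rw [intervalIntegral.integral_add hint₁ intervalIntegrable_const,
      intervalIntegral.integral_const, smul_eq_mul]
  rw [egoal]
  have ecancel : (1 / (b - a)) * ((∫ x in a..b, f x ((c + d) / 2)) +
        (b - a) * ((1 / (d - c)) * ∫ y in c..d, f ((a + b) / 2) y))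
      = (1 / (b - a)) * (∫ x in a..b, f x ((c + d) / 2)) +
        (1 / (d - c)) * ∫ y in c..d, f ((a + b) / 2) y := by
    field_simp
  rw [ecancel]
  linarith [h1, h2]
end
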